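/- Let β₂ ∈ [0,1), let n, l be positive integers with 2^l dividing n, let C ≥ 0, and let (G_s)_{s≥1} be a sequence of m×n real matrices with Frobenius norm ‖G_s‖ ≤ C for all s. With G̃_s = G_s·A^(l), Ṽ_0 = 0, Ṽ_s = β₂·Ṽ_{s−1} + (1−β₂)·(G̃_s ∘ G̃_s), R_u = G_u − G̃_u·E^(l), and V_u = Ṽ_u·E^(l) + R_u ∘ R_u (where ∘ denotes entrywise product), the reconstructed second moment satisfies ‖V_u‖ ≤ 2C² for every u ≥ 1. -/

import Mathlib

open scoped Matrix

/-- The fold matrix `A^(l) ∈ ℝ^{n × n/2^l}`: (using 0-based indices `i, j`, corresponding to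
1-based indices `i+1, j+1`) the entry `A^(l)_{i,j}` is `1/2^l` if
`j·2^l ≤ i < (j+1)·2^l` (i.e. 1-based `(j-1)·2^l + 1 ≤ i ≤ j·2^l`) and `0` otherwise. -/
noncomputable def foldA (n l : ℕ) : Matrix (Fin n) (Fin (n / 2 ^ l)) ℝ :=
  Matrix.of fun i j =>
    if (j : ℕ) * 2 ^ l ≤ (i : ℕ) ∧ (i : ℕ) < ((j : ℕ) + 1) * 2 ^ l then (1 : ℝ) / 2 ^ l else 0

/-- The unfold matrix `E^(l) ∈ ℝ^{n/2^l × n}`: the entry `E^(l)_{i,j}` is `1` if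
`i·2^l ≤ j < (i+1)·2^l` (i.e. 1-based `(i-1)·2^l + 1 ≤ j ≤ i·2^l`) and `0` otherwise. -/
def unfoldE (n l : ℕ) : Matrix (Fin (n / 2 ^ l)) (Fin n) ℝ :=
  Matrix.of fun i j =>
    if (i : ℕ) * 2 ^ l ≤ (j : ℕ) ∧ (j : ℕ) < ((i : ℕ) + 1) * 2 ^ l then (1 : ℝ) else 0

/-- The fold-unfold operator `P^(l) = A^(l) E^(l) ∈ ℝ^{n×n}`. -/
noncomputable def foldP (n l : ℕ) : Matrix (Fin n) (Fin n) ℝ :=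
  foldA n l * unfoldE n l

-- Equip matrices with the Frobenius norm.
attribute [local instance] Matrix.frobeniusNormedAddCommGroup Matrix.frobeniusNormedSpace
  Matrix.frobeniusIsBoundedSMul

open scoped Matrix  -- Hadamard product notation ⊙

variable {n l : ℕ}

/-- The block of a column index. -/
def blk (hdvd : 2 ^ l ∣ n) (j : Fin n) : Fin (n / 2 ^ l) :=
  ⟨(j : ℕ) / 2 ^ l, Nat.div_lt_div_of_lt_of_dvd hdvd j.isLt⟩

lemma blk_spec (hdvd : 2 ^ l ∣ n) (b : Fin (n / 2 ^ l)) (j : Fin n) :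
    ((b : ℕ) * 2 ^ l ≤ (j : ℕ) ∧ (j : ℕ) < ((b : ℕ) + 1) * 2 ^ l) ↔ b = blk hdvd j := by
  constructor
  · rintro ⟨h1, h2⟩
    exact Fin.ext (Nat.div_eq_of_lt_le h1 h2).symm
  · rintro rfl
    have hc : 0 < 2 ^ l := Nat.pow_pos (by norm_num)
    have h1 := Nat.div_add_mod (j : ℕ) (2 ^ l)
    have h2 := Nat.mod_lt (j : ℕ) hc
    simp only [blk]
    refine ⟨?_, ?_⟩
    · exact Nat.div_mul_le_self _ _
    · rw [Nat.add_mul, Nat.one_mul, Nat.mul_comm]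
      omega

lemma unfoldE_apply (hdvd : 2 ^ l ∣ n) (b : Fin (n / 2 ^ l)) (j : Fin n) :
    unfoldE n l b j = if b = blk hdvd j then 1 else 0 := by
  simp only [unfoldE, Matrix.of_apply, blk_spec hdvd]

lemma foldA_apply (hdvd : 2 ^ l ∣ n) (j : Fin n) (b : Fin (n / 2 ^ l)) :
    foldA n l j b = if b = blk hdvd j then (1 : ℝ) / 2 ^ l else 0 := by
  simp only [foldA, Matrix.of_apply, blk_spec hdvd]

/-- `(b, r) ↦ b * 2^l + r` as an equivalence. -/
def be (hdvd : 2 ^ l ∣ n) : Fin (n / 2 ^ l) × Fin (2 ^ l) ≃ Fin n where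
  toFun p := ⟨(p.1 : ℕ) * 2 ^ l + (p.2 : ℕ), by
    have h1 : (p.1 : ℕ) + 1 ≤ n / 2 ^ l := p.1.isLt
    have h2 : ((p.1 : ℕ) + 1) * 2 ^ l ≤ (n / 2 ^ l) * 2 ^ l := Nat.mul_le_mul_right _ h1
    have h3 : (n / 2 ^ l) * 2 ^ l = n := Nat.div_mul_cancel hdvd
    have h4 := p.2.isLt
    nlinarith [p.2.isLt]⟩
  invFun j := (blk hdvd j, ⟨(j : ℕ) % 2 ^ l, Nat.mod_lt _ (Nat.pow_pos (by norm_num))⟩)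
  left_inv p := by
    have hc : 0 < 2 ^ l := Nat.pow_pos (by norm_num)
    have h2 := p.2.isLt
    ext
    · simp only [blk]
      rw [Nat.mul_comm, Nat.mul_add_div hc, Nat.div_eq_of_lt h2]
      omega
    · simp only []
      rw [Nat.mul_comm, Nat.mul_add_mod, Nat.mod_eq_of_lt h2]
  right_inv j := by
    have hc : 0 < 2 ^ l := Nat.pow_pos (by norm_num)
    ext
    simp only [blk]
    rw [Nat.mul_comm, Nat.div_add_mod]

lemma blk_be (hdvd : 2 ^ l ∣ n) (b : Fin (n / 2 ^ l)) (r : Fin (2 ^ l)) :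
    blk hdvd (be hdvd (b, r)) = b := by
  have hc : 0 < 2 ^ l := Nat.pow_pos (by norm_num)
  ext
  simp only [blk, be, Equiv.coe_fn_mk]
  rw [Nat.mul_comm, Nat.mul_add_div hc, Nat.div_eq_of_lt r.isLt]
  omega

lemma sum_blk (hdvd : 2 ^ l ∣ n) (f : Fin n → ℝ) :
    ∑ j, f j = ∑ b, ∑ r, f (be hdvd (b, r)) := by
  rw [← Equiv.sum_comp (be hdvd) f, Fintype.sum_prod_type]

def msq {m k : ℕ} (X : Matrix (Fin m) (Fin k) ℝ) : ℝ := ∑ i, ∑ j, (X i j) ^ 2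

variable {m : ℕ}

lemma mul_unfoldE_apply (hdvd : 2 ^ l ∣ n) (X : Matrix (Fin m) (Fin (n / 2 ^ l)) ℝ)
    (i : Fin m) (j : Fin n) : (X * unfoldE n l) i j = X i (blk hdvd j) := by
  rw [Matrix.mul_apply]
  simp_rw [unfoldE_apply hdvd, mul_ite, mul_one, mul_zero]
  simp

lemma mul_foldA_apply (hdvd : 2 ^ l ∣ n) (X : Matrix (Fin m) (Fin n) ℝ)
    (i : Fin m) (b : Fin (n / 2 ^ l)) :
    (X * foldA n l) i b = (∑ r, X i (be hdvd (b, r))) / 2 ^ l := by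
  rw [Matrix.mul_apply]
  simp_rw [foldA_apply hdvd, mul_ite, mul_zero]
  rw [sum_blk hdvd (fun j => if b = blk hdvd j then X i j * (1 / 2 ^ l) else 0)]
  simp_rw [blk_be hdvd]
  rw [Finset.sum_comm]
  simp only [Finset.sum_ite_eq, Finset.mem_univ, if_true, div_eq_mul_inv, mul_comm]
  rw [← Finset.mul_sum, one_mul]

lemma sum_sq_le_sq_sum {ι : Type*} (s : Finset ι) (f : ι → ℝ) (hf : ∀ i ∈ s, 0 ≤ f i) :
    ∑ i ∈ s, f i ^ 2 ≤ (∑ i ∈ s, f i) ^ 2 := by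
  have h : ∀ i ∈ s, f i ^ 2 ≤ f i * ∑ j ∈ s, f j := by
    intro i hi
    rw [sq]
    exact mul_le_mul_of_nonneg_left (Finset.single_le_sum hf hi) (hf i hi)
  calc ∑ i ∈ s, f i ^ 2 ≤ ∑ i ∈ s, f i * ∑ j ∈ s, f j := Finset.sum_le_sum h
    _ = (∑ i ∈ s, f i) ^ 2 := by rw [← Finset.sum_mul, sq]

open scoped Matrix in
lemma msq_hadamard_le {k : ℕ} (X : Matrix (Fin m) (Fin k) ℝ) :
    msq (X ⊙ X) ≤ (msq X) ^ 2 := by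
  unfold msq
  simp_rw [Matrix.hadamard_apply, ← sq, ← pow_mul]
  rw [← Fintype.sum_prod_type (f := fun p : Fin m × Fin k => X p.1 p.2 ^ (2 * 2)),
      ← Fintype.sum_prod_type (f := fun p : Fin m × Fin k => X p.1 p.2 ^ 2)]
  have := sum_sq_le_sq_sum Finset.univ (fun p : Fin m × Fin k => X p.1 p.2 ^ 2)
    (fun i _ => sq_nonneg _)
  simpa [← pow_mul] using this

lemma msq_mul_unfoldE (hdvd : 2 ^ l ∣ n) (X : Matrix (Fin m) (Fin (n / 2 ^ l)) ℝ) :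
    msq (X * unfoldE n l) = 2 ^ l * msq X := by
  unfold msq
  simp_rw [mul_unfoldE_apply hdvd]
  rw [Finset.mul_sum]
  refine Finset.sum_congr rfl fun i _ => ?_
  rw [sum_blk hdvd (fun j => X i (blk hdvd j) ^ 2)]
  simp_rw [blk_be hdvd]
  simp [Finset.mul_sum]

lemma msq_mul_foldA_le (hdvd : 2 ^ l ∣ n) (X : Matrix (Fin m) (Fin n) ℝ) :
    msq (X * foldA n l) ≤ msq X / 2 ^ l := by
  have hc : (0:ℝ) < 2 ^ l := by positivity
  unfold msq
  rw [Finset.sum_div]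
  refine Finset.sum_le_sum fun i _ => ?_
  rw [sum_blk hdvd (fun j => X i j ^ 2), Finset.sum_div]
  refine Finset.sum_le_sum fun b _ => ?_
  rw [mul_foldA_apply hdvd, div_pow]
  rw [div_le_div_iff₀ (by positivity) hc]
  have key := sq_sum_le_card_mul_sum_sq (s := (Finset.univ : Finset (Fin (2 ^ l))))
    (f := fun r => X i (be hdvd (b, r)))
  simp only [Finset.card_univ, Fintype.card_fin] at key
  calc (∑ r, X i (be hdvd (b, r))) ^ 2 * 2 ^ l
      ≤ (2 ^ l * ∑ r, X i (be hdvd (b, r)) ^ 2) * 2 ^ l := by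
        refine mul_le_mul_of_nonneg_right ?_ (le_of_lt hc)
        exact_mod_cast key
    _ = (∑ r, X i (be hdvd (b, r)) ^ 2) * (2 ^ l) ^ 2 := by ring

lemma msq_residual_le (hdvd : 2 ^ l ∣ n) (X : Matrix (Fin m) (Fin n) ℝ) :
    msq (X - (X * foldA n l) * unfoldE n l) ≤ msq X := by
  have hc : (0:ℝ) < 2 ^ l := by positivity
  unfold msq
  refine Finset.sum_le_sum fun i _ => ?_
  rw [sum_blk hdvd (fun j => ((X - (X * foldA n l) * unfoldE n l) i j) ^ 2),
      sum_blk hdvd (fun j => X i j ^ 2)]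
  refine Finset.sum_le_sum fun b _ => ?_
  set a : Fin (2 ^ l) → ℝ := fun r => X i (be hdvd (b, r)) with ha
  set S : ℝ := ∑ r, a r with hS
  have hentry : ∀ r, (X - (X * foldA n l) * unfoldE n l) i (be hdvd (b, r)) = a r - S / 2 ^ l := by
    intro r
    rw [Matrix.sub_apply, mul_unfoldE_apply hdvd, blk_be hdvd, mul_foldA_apply hdvd]
  simp_rw [hentry]
  have expand : ∑ r, (a r - S / 2 ^ l) ^ 2
      = (∑ r, a r ^ 2) - (2 / 2 ^ l) * S * S + (2 ^ l : ℝ) * (S / 2 ^ l) ^ 2 := by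
    calc ∑ r, (a r - S / 2 ^ l) ^ 2
        = ∑ r, (a r ^ 2 - (2 / 2 ^ l) * S * a r + (S / 2 ^ l) ^ 2) := by
          refine Finset.sum_congr rfl fun r _ => by ring
      _ = (∑ r, a r ^ 2) - (2 / 2 ^ l) * S * S + (2 ^ l : ℝ) * (S / 2 ^ l) ^ 2 := by
          rw [Finset.sum_add_distrib, Finset.sum_sub_distrib, ← Finset.mul_sum,
            Finset.sum_const, Finset.card_univ, Fintype.card_fin, nsmul_eq_mul, ← hS]
          push_cast
          ring
  rw [expand]
  have : (2 ^ l : ℝ) * (S / 2 ^ l) ^ 2 = S ^ 2 / 2 ^ l := by field_simp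
  rw [this]
  have h2 : (2 / 2 ^ l) * S * S = 2 * (S ^ 2 / 2 ^ l) := by field_simp
  rw [h2]
  have hpos : 0 ≤ S ^ 2 / 2 ^ l := by positivity
  linarith


lemma msq_nonneg {k : ℕ} (X : Matrix (Fin m) (Fin k) ℝ) : 0 ≤ msq X := by
  unfold msq; positivity

lemma norm_eq_sqrt_msq {k : ℕ} (X : Matrix (Fin m) (Fin k) ℝ) :
    ‖X‖ = Real.sqrt (msq X) := by
  rw [Matrix.frobenius_norm_def, Real.sqrt_eq_rpow, msq]
  congr 1
  refine Finset.sum_congr rfl fun i _ => Finset.sum_congr rfl fun j _ => ?_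
  rw [Real.rpow_two, Real.norm_eq_abs, sq_abs]

lemma norm_le_of_msq_le {k : ℕ} {X : Matrix (Fin m) (Fin k) ℝ} {a : ℝ}
    (h : msq X ≤ a ^ 2) (ha : 0 ≤ a) : ‖X‖ ≤ a := by
  rw [norm_eq_sqrt_msq]
  calc Real.sqrt (msq X) ≤ Real.sqrt (a ^ 2) := Real.sqrt_le_sqrt h
    _ = a := by rw [Real.sqrt_sq ha]

lemma msq_eq_norm_sq {k : ℕ} (X : Matrix (Fin m) (Fin k) ℝ) : msq X = ‖X‖ ^ 2 := by
  rw [norm_eq_sqrt_msq, Real.sq_sqrt (msq_nonneg X)]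


/-- Bound on the reconstructed second moment: if `‖G_s‖ ≤ C` for all `s` (Frobenius norm),
then with `G̃_s = G_s A^(l)`, `Ṽ_0 = 0`, `Ṽ_s = β₂ Ṽ_{s−1} + (1−β₂) (G̃_s ⊙ G̃_s)`,
`R_u = G_u − G̃_u E^(l)` and `V_u = Ṽ_u E^(l) + R_u ⊙ R_u` (entrywise product),
we have `‖V_u‖ ≤ 2C²` for every `u ≥ 1`. -/
theorem foam_second_moment_bound {m : ℕ} (n l : ℕ) (hn : 0 < n) (hl : 0 < l)
    (hdvd : 2 ^ l ∣ n) (β₂ : ℝ) (hβ₂ : β₂ ∈ Set.Ico (0 : ℝ) 1)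
    (C : ℝ) (hC : 0 ≤ C)
    (G : ℕ → Matrix (Fin m) (Fin n) ℝ)
    (hGC : ∀ s, ‖G s‖ ≤ C)
    (Gtil : ℕ → Matrix (Fin m) (Fin (n / 2 ^ l)) ℝ)
    (hGtil : ∀ s, Gtil s = G s * foldA n l)
    (Vtil : ℕ → Matrix (Fin m) (Fin (n / 2 ^ l)) ℝ)
    (hVtil0 : Vtil 0 = 0)
    (hVtilrec : ∀ s, 1 ≤ s → Vtil s = β₂ • Vtil (s - 1) + (1 - β₂) • (Gtil s ⊙ Gtil s))
    (R : ℕ → Matrix (Fin m) (Fin n) ℝ)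
    (hR : ∀ s, R s = G s - Gtil s * unfoldE n l)
    (V : ℕ → Matrix (Fin m) (Fin n) ℝ)
    (hV : ∀ s, V s = Vtil s * unfoldE n l + R s ⊙ R s)
    (u : ℕ) (hu : 1 ≤ u) :
    ‖V u‖ ≤ 2 * C ^ 2 := by
  obtain ⟨hβ0, hβ1⟩ := hβ₂
  have hc : (0:ℝ) < 2 ^ l := by positivity
  have hc1 : (1:ℝ) ≤ 2 ^ l := one_le_pow₀ (by norm_num)
  -- msq of G
  have hmsqG : ∀ s, msq (G s) ≤ C ^ 2 := fun s => by
    rw [msq_eq_norm_sq]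
    exact pow_le_pow_left₀ (norm_nonneg _) (hGC s) 2
  -- msq of Gtil
  have hmsqGt : ∀ s, msq (Gtil s) ≤ C ^ 2 / 2 ^ l := fun s => by
    rw [hGtil s]
    calc msq (G s * foldA n l) ≤ msq (G s) / 2 ^ l := msq_mul_foldA_le hdvd _
      _ ≤ C ^ 2 / 2 ^ l := by
        exact div_le_div_of_nonneg_right (hmsqG s) hc.le
  -- norm of Gtil ⊙ Gtil
  have hHad : ∀ s, ‖Gtil s ⊙ Gtil s‖ ≤ C ^ 2 / 2 ^ l := fun s => by
    refine norm_le_of_msq_le ?_ (by positivity)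
    calc msq (Gtil s ⊙ Gtil s) ≤ (msq (Gtil s)) ^ 2 := msq_hadamard_le _
      _ ≤ (C ^ 2 / 2 ^ l) ^ 2 := pow_le_pow_left₀ (msq_nonneg _) (hmsqGt s) 2
  -- norm bound on Vtil, by induction
  have hVt : ∀ s, ‖Vtil s‖ ≤ C ^ 2 / 2 ^ l := by
    intro s
    induction s with
    | zero => rw [hVtil0, norm_zero]; positivity
    | succ t ih =>
      rw [hVtilrec (t + 1) (Nat.le_add_left 1 t), Nat.add_sub_cancel]
      calc ‖β₂ • Vtil t + (1 - β₂) • (Gtil (t+1) ⊙ Gtil (t+1))‖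
          ≤ ‖β₂ • Vtil t‖ + ‖(1 - β₂) • (Gtil (t+1) ⊙ Gtil (t+1))‖ := norm_add_le _ _
        _ = β₂ * ‖Vtil t‖ + (1 - β₂) * ‖Gtil (t+1) ⊙ Gtil (t+1)‖ := by
            rw [norm_smul, norm_smul, Real.norm_eq_abs, Real.norm_eq_abs,
              abs_of_nonneg hβ0, abs_of_nonneg (by linarith)]
        _ ≤ β₂ * (C ^ 2 / 2 ^ l) + (1 - β₂) * (C ^ 2 / 2 ^ l) := by
            have := hHad (t + 1)
            have h1 := mul_le_mul_of_nonneg_left ih hβ0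
            have h2 := mul_le_mul_of_nonneg_left this (by linarith : (0:ℝ) ≤ 1 - β₂)
            linarith
        _ = C ^ 2 / 2 ^ l := by ring
  -- norm of Vtil u * E
  have hVE : ‖Vtil u * unfoldE n l‖ ≤ C ^ 2 := by
    refine norm_le_of_msq_le ?_ (by positivity)
    rw [msq_mul_unfoldE hdvd]
    have h1 : msq (Vtil u) ≤ (C ^ 2 / 2 ^ l) ^ 2 := by
      rw [msq_eq_norm_sq]
      exact pow_le_pow_left₀ (norm_nonneg _) (hVt u) 2
    calc (2:ℝ) ^ l * msq (Vtil u) ≤ 2 ^ l * (C ^ 2 / 2 ^ l) ^ 2 :=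
          mul_le_mul_of_nonneg_left h1 (le_of_lt hc)
      _ = C ^ 4 / 2 ^ l := by field_simp
      _ ≤ (C ^ 2) ^ 2 := by
          rw [div_le_iff₀ hc]
          nlinarith [pow_nonneg hC 4]
  -- norm of R u ⊙ R u
  have hmsqR : msq (R u) ≤ C ^ 2 := by
    rw [hR u, hGtil u]
    exact (msq_residual_le hdvd (G u)).trans (hmsqG u)
  have hRR : ‖R u ⊙ R u‖ ≤ C ^ 2 := by
    refine norm_le_of_msq_le ?_ (by positivity)
    calc msq (R u ⊙ R u) ≤ (msq (R u)) ^ 2 := msq_hadamard_le _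
      _ ≤ (C ^ 2) ^ 2 := pow_le_pow_left₀ (msq_nonneg _) hmsqR 2
  rw [hV u]
  calc ‖Vtil u * unfoldE n l + R u ⊙ R u‖
      ≤ ‖Vtil u * unfoldE n l‖ + ‖R u ⊙ R u‖ := norm_add_le _ _
    _ ≤ C ^ 2 + C ^ 2 := add_le_add hVE hRR
    _ = 2 * C ^ 2 := by ring
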